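/- Let G be a connected 2K2-free graph containing an induced diamond D with vertex set L0 = {v1, v2, v3, v4} and edge set {v1v2, v2v3, v3v4, v4v1, v2v4}. For i ∈ {1,2,3} let Xi be the set of vertices outside L0 whose neighborhood in L0 is exactly {vi}; let Y1 be those with neighborhood in L0 exactly {v1, v2}, Y2 those with neighborhood exactly {v2, v3}, Z1 those with neighborhood exactly {v1, v3}, Z2 those with neighborhood exactly {v1, v2, v3}, and let L2 be the set of vertices outside L0 with no neighbor in L0. Then: (1) V(G) = N(v4) ∪ {v4} ∪ X1 ∪ X2 ∪ X3 ∪ Y1 ∪ Y2 ∪ Z1 ∪ Z2 ∪ L2; (2) X1 = ∅ or X3 = ∅; (3) X1 ∪ X2 ∪ Y1, Y2, Z1 and L2 are each independent sets; (4) there are no edges between X1 ∪ X2 ∪ X3 ∪ Y1 ∪ Y2 ∪ Z1 and L2. -/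

import Mathlib

open SimpleGraph

/-- `G` contains no induced subgraph isomorphic to `H` (graph embeddings are
exactly the inclusions of induced subgraphs). -/
def IndFree {W V : Type*} (H : SimpleGraph W) (G : SimpleGraph V) : Prop :=
  IsEmpty (H ↪g G)

/-- A set of vertices is independent if its elements are pairwise nonadjacent. -/
def IsIndep {V : Type*} (G : SimpleGraph V) (s : Set V) : Prop :=
  s.Pairwise fun u v => ¬ G.Adj u v

/-- A graph is perfect if every induced subgraph has chromatic number equal to
its clique number. -/
def IsPerfect {V : Type*} (G : SimpleGraph V) : Prop :=
  ∀ S : Set V, (G.induce S).chromaticNumber = ((G.induce S).cliqueNum : ℕ∞)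

/-- `2K₂`: two disjoint edges `{0,1}` and `{2,3}`. -/
def graph2K2 : SimpleGraph (Fin 4) :=
  SimpleGraph.fromRel (fun a b => (a = 0 ∧ b = 1) ∨ (a = 2 ∧ b = 3))

/-- The path `P₄`. -/
def graphP4 : SimpleGraph (Fin 4) :=
  SimpleGraph.fromRel (fun a b => (a = 0 ∧ b = 1) ∨ (a = 1 ∧ b = 2) ∨ (a = 2 ∧ b = 3))

/-- The path `P₃`. -/
def graphP3 : SimpleGraph (Fin 3) :=
  SimpleGraph.fromRel (fun a b => (a = 0 ∧ b = 1) ∨ (a = 1 ∧ b = 2))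

/-- `P₄ ∪ K₁`: a path on `{0,1,2,3}` plus the isolated vertex `4`. -/
def graphP4K1 : SimpleGraph (Fin 5) :=
  SimpleGraph.fromRel (fun a b => (a = 0 ∧ b = 1) ∨ (a = 1 ∧ b = 2) ∨ (a = 2 ∧ b = 3))

/-- The cycle `C₄`. -/
def graphC4 : SimpleGraph (Fin 4) :=
  SimpleGraph.fromRel
    (fun a b => (a = 0 ∧ b = 1) ∨ (a = 1 ∧ b = 2) ∨ (a = 2 ∧ b = 3) ∨ (a = 3 ∧ b = 0))

/-- The gem `K₁ + P₄`: a path on `{0,1,2,3}` plus the universal vertex `4`. -/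
def graphGem : SimpleGraph (Fin 5) :=
  SimpleGraph.fromRel
    (fun a b => (a = 0 ∧ b = 1) ∨ (a = 1 ∧ b = 2) ∨ (a = 2 ∧ b = 3) ∨ (a ≠ 4 ∧ b = 4))

/-- The wheel `K₁ + C₄`: a 4-cycle on `{0,1,2,3}` plus the universal vertex `4`. -/
def graphWheel : SimpleGraph (Fin 5) :=
  SimpleGraph.fromRel
    (fun a b => (a = 0 ∧ b = 1) ∨ (a = 1 ∧ b = 2) ∨ (a = 2 ∧ b = 3) ∨ (a = 3 ∧ b = 0) ∨
      (a ≠ 4 ∧ b = 4))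

/-- `P₂ ∪ P₃`: the edge `{0,1}` together with the path `2 - 3 - 4`. -/
def graphP2P3 : SimpleGraph (Fin 5) :=
  SimpleGraph.fromRel (fun a b => (a = 0 ∧ b = 1) ∨ (a = 2 ∧ b = 3) ∨ (a = 3 ∧ b = 4))

/-- `P₂ ∪ P₄`: the edge `{0,1}` together with the path `2 - 3 - 4 - 5`. -/
def graphP2P4 : SimpleGraph (Fin 6) :=
  SimpleGraph.fromRel
    (fun a b => (a = 0 ∧ b = 1) ∨ (a = 2 ∧ b = 3) ∨ (a = 3 ∧ b = 4) ∨ (a = 4 ∧ b = 5))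

/-- `HVN`: `K₄` on `{0,1,2,3}` plus a vertex `4` adjacent to exactly `0` and `1`. -/
def graphHVN : SimpleGraph (Fin 5) :=
  SimpleGraph.fromRel (fun a b => (a < 4 ∧ b < 4) ∨ (a = 4 ∧ (b = 0 ∨ b = 1)))

/-- `K₅ - e`: the complete graph on 5 vertices minus the edge `{0,1}`. -/
def graphK5e : SimpleGraph (Fin 5) :=
  SimpleGraph.fromRel (fun a b => ¬((a = 0 ∧ b = 1) ∨ (a = 1 ∧ b = 0)))

/-- The diamond `K₄ - e`: the complete graph on 4 vertices minus the edge `{0,2}`. -/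
def graphDiamond : SimpleGraph (Fin 4) :=
  SimpleGraph.fromRel (fun a b => ¬((a = 0 ∧ b = 2) ∨ (a = 2 ∧ b = 0)))

/-- The paw: a triangle `{0,1,2}` plus a pendant vertex `3` adjacent to `0`. -/
def graphPaw : SimpleGraph (Fin 4) :=
  SimpleGraph.fromRel
    (fun a b => (a = 0 ∧ b = 1) ∨ (a = 1 ∧ b = 2) ∨ (a = 0 ∧ b = 2) ∨ (a = 0 ∧ b = 3))

/-- `K₅`. -/
def graphK5 : SimpleGraph (Fin 5) := ⊤

/-- The join `K₁ + H`: `H` together with a new universal vertex `none`. -/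
def joinK1 {W : Type*} (H : SimpleGraph W) : SimpleGraph (Option W) :=
  SimpleGraph.fromRel
    (fun a b => (∃ u v, a = some u ∧ b = some v ∧ H.Adj u v) ∨ a = none)

/-- A pseudo-split graph is a `(2K₂, C₄)`-free graph. -/
def IsPseudoSplit {V : Type*} (G : SimpleGraph V) : Prop :=
  IndFree graph2K2 G ∧ IndFree graphC4 G


lemma no2K2 {V : Type*} {G : SimpleGraph V} (h : IndFree graph2K2 G)
    {a b c d : V} (hab : G.Adj a b) (hcd : G.Adj c d)
    (hac : ¬G.Adj a c) (had : ¬G.Adj a d) (hbc : ¬G.Adj b c) (hbd : ¬G.Adj b d)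
    (nac : a ≠ c) (nad : a ≠ d) (nbc : b ≠ c) (nbd : b ≠ d) : False := by
  have hab' := hab.ne
  have hcd' := hcd.ne
  apply h.false
  refine ⟨⟨![a,b,c,d], ?_⟩, ?_⟩
  · intro i j hij
    fin_cases i <;> fin_cases j <;> simp_all
  · have hca : ¬G.Adj c a := fun h => hac h.symm
    have hda : ¬G.Adj d a := fun h => had h.symm
    have hcb : ¬G.Adj c b := fun h => hbc h.symm
    have hdb : ¬G.Adj d b := fun h => hbd h.symm
    intro i j
    show G.Adj (![a,b,c,d] i) (![a,b,c,d] j) ↔ graph2K2.Adj i j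
    fin_cases i <;> fin_cases j <;>
      simp [graph2K2, SimpleGraph.fromRel_adj, hab, hcd, hab.symm, hcd.symm,
        hac, had, hbc, hbd, hca, hda, hcb, hdb, G.irrefl]

set_option maxHeartbeats 2000000 in
/-- Structure around an induced diamond in a connected `2K₂`-free graph. -/
theorem stmt5 {V : Type*} [Fintype V] (G : SimpleGraph V)
    (hconn : G.Connected) (h2k2 : IndFree graph2K2 G)
    (v1 v2 v3 v4 : V) (hd : [v1, v2, v3, v4].Nodup)
    (h12 : G.Adj v1 v2) (h23 : G.Adj v2 v3) (h34 : G.Adj v3 v4)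
    (h14 : G.Adj v1 v4) (h24 : G.Adj v2 v4) (h13 : ¬ G.Adj v1 v3)
    (L0 X1 X2 X3 Y1 Y2 Z1 Z2 L2 : Set V)
    (hL0 : L0 = {v1, v2, v3, v4})
    (hX1 : X1 = {x | x ∉ L0 ∧ G.Adj x v1 ∧ ¬G.Adj x v2 ∧ ¬G.Adj x v3 ∧ ¬G.Adj x v4})
    (hX2 : X2 = {x | x ∉ L0 ∧ ¬G.Adj x v1 ∧ G.Adj x v2 ∧ ¬G.Adj x v3 ∧ ¬G.Adj x v4})
    (hX3 : X3 = {x | x ∉ L0 ∧ ¬G.Adj x v1 ∧ ¬G.Adj x v2 ∧ G.Adj x v3 ∧ ¬G.Adj x v4})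
    (hY1 : Y1 = {x | x ∉ L0 ∧ G.Adj x v1 ∧ G.Adj x v2 ∧ ¬G.Adj x v3 ∧ ¬G.Adj x v4})
    (hY2 : Y2 = {x | x ∉ L0 ∧ ¬G.Adj x v1 ∧ G.Adj x v2 ∧ G.Adj x v3 ∧ ¬G.Adj x v4})
    (hZ1 : Z1 = {x | x ∉ L0 ∧ G.Adj x v1 ∧ ¬G.Adj x v2 ∧ G.Adj x v3 ∧ ¬G.Adj x v4})
    (hZ2 : Z2 = {x | x ∉ L0 ∧ G.Adj x v1 ∧ G.Adj x v2 ∧ G.Adj x v3 ∧ ¬G.Adj x v4})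
    (hL2 : L2 = {x | x ∉ L0 ∧ ¬G.Adj x v1 ∧ ¬G.Adj x v2 ∧ ¬G.Adj x v3 ∧ ¬G.Adj x v4}) :
    ((Set.univ : Set V) =
        G.neighborSet v4 ∪ {v4} ∪ X1 ∪ X2 ∪ X3 ∪ Y1 ∪ Y2 ∪ Z1 ∪ Z2 ∪ L2) ∧
    (X1 = ∅ ∨ X3 = ∅) ∧
    IsIndep G (X1 ∪ X2 ∪ Y1) ∧ IsIndep G Y2 ∧ IsIndep G Z1 ∧ IsIndep G L2 ∧
    (∀ x ∈ X1 ∪ X2 ∪ X3 ∪ Y1 ∪ Y2 ∪ Z1, ∀ y ∈ L2, ¬ G.Adj x y) := by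

  simp only [List.nodup_cons, List.mem_cons, List.not_mem_nil, or_false,
    List.mem_singleton, not_or, List.nodup_nil, and_true] at hd
  obtain ⟨⟨n12, n13, n14⟩, ⟨n23, n24⟩, n34⟩ := hd
  subst hL0 hX1 hX2 hX3 hY1 hY2 hZ1 hZ2 hL2
  have hmem : ∀ x : V, x ∉ ({v1, v2, v3, v4} : Set V) ↔
      (x ≠ v1 ∧ x ≠ v2 ∧ x ≠ v3 ∧ x ≠ v4) := by
    intro x
    simp only [Set.mem_insert_iff, Set.mem_singleton_iff]
    tauto
  refine ⟨?_, ?_, ?_, ?_, ?_, ?_, ?_⟩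
  · symm
    rw [Set.eq_univ_iff_forall]
    intro x
    simp only [Set.mem_union, Set.mem_setOf_eq, SimpleGraph.mem_neighborSet,
      Set.mem_singleton_iff]
    by_cases h4 : G.Adj v4 x
    · exact Or.inl (Or.inl (Or.inl (Or.inl (Or.inl (Or.inl (Or.inl (Or.inl (Or.inl h4))))))))
    by_cases hx : x = v4
    · exact Or.inl (Or.inl (Or.inl (Or.inl (Or.inl (Or.inl (Or.inl (Or.inl (Or.inr hx))))))))
    have hnx4 : ¬ G.Adj x v4 := fun h => h4 h.symm
    have hxL0 : x ∉ ({v1, v2, v3, v4} : Set V) := by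
      rw [hmem]
      refine ⟨?_, ?_, ?_, hx⟩
      · rintro rfl; exact h4 h14.symm
      · rintro rfl; exact h4 h24.symm
      · rintro rfl; exact h4 h34.symm
    by_cases h1 : G.Adj x v1 <;> by_cases h2 : G.Adj x v2 <;> by_cases h3 : G.Adj x v3
    · exact Or.inl (Or.inr ⟨hxL0, h1, h2, h3, hnx4⟩)
    · exact Or.inl (Or.inl (Or.inl (Or.inl (Or.inr ⟨hxL0, h1, h2, h3, hnx4⟩))))
    · exact Or.inl (Or.inl (Or.inr ⟨hxL0, h1, h2, h3, hnx4⟩))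
    · exact Or.inl (Or.inl (Or.inl (Or.inl (Or.inl (Or.inl (Or.inl
        (Or.inr ⟨hxL0, h1, h2, h3, hnx4⟩)))))))
    · exact Or.inl (Or.inl (Or.inl (Or.inr ⟨hxL0, h1, h2, h3, hnx4⟩)))
    · exact Or.inl (Or.inl (Or.inl (Or.inl (Or.inl (Or.inl
        (Or.inr ⟨hxL0, h1, h2, h3, hnx4⟩))))))
    · exact Or.inl (Or.inl (Or.inl (Or.inl (Or.inl
        (Or.inr ⟨hxL0, h1, h2, h3, hnx4⟩)))))
    · exact Or.inr ⟨hxL0, h1, h2, h3, hnx4⟩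
  · by_cases hX1e : {x | x ∉ ({v1, v2, v3, v4} : Set V) ∧ G.Adj x v1 ∧ ¬G.Adj x v2 ∧
        ¬G.Adj x v3 ∧ ¬G.Adj x v4} = (∅ : Set V)
    · exact Or.inl hX1e
    · right
      rw [Set.eq_empty_iff_forall_notMem]
      rintro y ⟨hyL, hy1, hy2, hy3, hy4⟩
      rw [Set.eq_empty_iff_forall_notMem] at hX1e
      push_neg at hX1e
      obtain ⟨x, hxL, hx1, hx2, hx3, hx4⟩ := hX1e
      rw [hmem] at hxL hyL
      by_cases hxy : G.Adj x y
      · exact no2K2 h2k2 hxy h24 hx2 hx4 hy2 hy4 hxL.2.1 hxL.2.2.2 hyL.2.1 hyL.2.2.2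
      · have hxney : x ≠ y := by rintro rfl; exact hy1 hx1
        exact no2K2 h2k2 hx1 hy3 hxy hx3 (fun h => hy1 h.symm) h13
          hxney hxL.2.2.1 (fun h => hyL.1 h.symm) n13
  · rintro u hu v hv hne hadj
    have hu' : ¬G.Adj u v3 ∧ ¬G.Adj u v4 ∧ u ≠ v3 ∧ u ≠ v4 := by
      rcases hu with (⟨h, _, _, h3, h4⟩ | ⟨h, _, _, h3, h4⟩) | ⟨h, _, _, h3, h4⟩ <;>
        rw [hmem] at h <;> exact ⟨h3, h4, h.2.2.1, h.2.2.2⟩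
    have hv' : ¬G.Adj v v3 ∧ ¬G.Adj v v4 ∧ v ≠ v3 ∧ v ≠ v4 := by
      rcases hv with (⟨h, _, _, h3, h4⟩ | ⟨h, _, _, h3, h4⟩) | ⟨h, _, _, h3, h4⟩ <;>
        rw [hmem] at h <;> exact ⟨h3, h4, h.2.2.1, h.2.2.2⟩
    exact no2K2 h2k2 hadj h34 hu'.1 hu'.2.1 hv'.1 hv'.2.1 hu'.2.2.1 hu'.2.2.2
      hv'.2.2.1 hv'.2.2.2
  · rintro u ⟨hu, hu1, _, _, hu4⟩ v ⟨hv, hv1, _, _, hv4⟩ hne hadj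
    rw [hmem] at hu hv
    exact no2K2 h2k2 hadj h14 hu1 hu4 hv1 hv4 hu.1 hu.2.2.2 hv.1 hv.2.2.2
  · rintro u ⟨hu, _, hu2, _, hu4⟩ v ⟨hv, _, hv2, _, hv4⟩ hne hadj
    rw [hmem] at hu hv
    exact no2K2 h2k2 hadj h24 hu2 hu4 hv2 hv4 hu.2.1 hu.2.2.2 hv.2.1 hv.2.2.2
  · rintro u ⟨hu, hu1, hu2, _, _⟩ v ⟨hv, hv1, hv2, _, _⟩ hne hadj
    rw [hmem] at hu hv
    exact no2K2 h2k2 hadj h12 hu1 hu2 hv1 hv2 hu.1 hu.2.1 hv.1 hv.2.1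
  · rintro x hx y ⟨hy, hy1, hy2, hy3, hy4⟩ hadj
    rw [hmem] at hy
    rcases hx with (((((⟨hL, _, h2', _, h4'⟩ | ⟨hL, h1', _, _, h4'⟩) | ⟨hL, h1', _, _, h4'⟩) |
        ⟨hL, _, _, h3', h4'⟩) | ⟨hL, h1', _, _, h4'⟩) | ⟨hL, _, h2', _, h4'⟩) <;>
      rw [hmem] at hL
    · exact no2K2 h2k2 hadj h24 h2' h4' hy2 hy4 hL.2.1 hL.2.2.2 hy.2.1 hy.2.2.2
    · exact no2K2 h2k2 hadj h14 h1' h4' hy1 hy4 hL.1 hL.2.2.2 hy.1 hy.2.2.2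
    · exact no2K2 h2k2 hadj h14 h1' h4' hy1 hy4 hL.1 hL.2.2.2 hy.1 hy.2.2.2
    · exact no2K2 h2k2 hadj h34 h3' h4' hy3 hy4 hL.2.2.1 hL.2.2.2 hy.2.2.1 hy.2.2.2
    · exact no2K2 h2k2 hadj h14 h1' h4' hy1 hy4 hL.1 hL.2.2.2 hy.1 hy.2.2.2
    · exact no2K2 h2k2 hadj h24 h2' h4' hy2 hy4 hL.2.1 hL.2.2.2 hy.2.1 hy.2.2.2
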